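/- Let q be a prime power with q ≥ 4 and let C be a linear code of length n over F_q. Then there exists a vector v ∈ F_q^n all of whose entries are nonzero such that the scaled code v*C is an LCD code, i.e. (v*C) ∩ (v*C)^⊥ = {0}. (In particular, C is monomial equivalent to an LCD code.) -/

import Mathlib

/-- The Euclidean dual of a linear code `C ⊆ F^n`. -/
def dualCode {F : Type*} [Field F] {n : ℕ} (C : Submodule F (Fin n → F)) :
    Submodule F (Fin n → F) where
  carrier := {x | ∀ c ∈ C, ∑ i, x i * c i = 0}
  add_mem' := by
    intro x y hx hy c hc
    simp [add_mul, Finset.sum_add_distrib, hx c hc, hy c hc]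
  zero_mem' := by
    intro c hc
    simp
  smul_mem' := by
    intro a x hx c hc
    simp [smul_eq_mul, mul_assoc, ← Finset.mul_sum, hx c hc]

open Matrix Finset

section DetExpand
variable {R : Type*} [CommRing R] {m : Type*} [DecidableEq m] [Fintype m]

private lemma det_updateRow_aux (B : Matrix m m R) (c w : m → R) (j : m) :
    ∀ s : Finset m, j ∉ s →
      (Matrix.updateRow (Matrix.of fun l i => B l i + if l ∈ s then c l * w i else 0) j w).det
        = (B.updateRow j w).det := by
  intro s
  induction s using Finset.induction_on with
  | empty =>
    intro _
    have h0 : (Matrix.of fun l i => B l i + if l ∈ (∅ : Finset m) then c l * w i else 0) = B := by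
      ext l i; simp
    rw [h0]
  | @insert a s ha ih =>
    intro hj
    have hja : j ≠ a := fun h => hj (h ▸ Finset.mem_insert_self a s)
    have hjs : j ∉ s := fun h => hj (Finset.mem_insert_of_mem h)
    have h1 : (Matrix.of fun l i => B l i + if l ∈ insert a s then c l * w i else 0)
        = Matrix.updateRow (Matrix.of fun l i => B l i + if l ∈ s then c l * w i else 0) a
            (B a + c a • w) := by
      ext l i
      rcases eq_or_ne l a with rfl | hl
      · simp
      · simp [Matrix.updateRow_apply, hl, Finset.mem_insert, hl]
    rw [h1]
    set X : Matrix m m R := Matrix.of fun l i => B l i + if l ∈ s then c l * w i else 0 with hX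
    have h2 : Matrix.updateRow (Matrix.updateRow X a (B a + c a • w)) j w
        = Matrix.updateRow (Matrix.updateRow X j w) a (B a + c a • w) := by
      ext l i
      rcases eq_or_ne l j with rfl | hlj
      · simp [Matrix.updateRow_apply, hja]
      · rcases eq_or_ne l a with rfl | hla
        · simp [Matrix.updateRow_apply, hja.symm]
        · simp [Matrix.updateRow_apply, hlj, hla]
    rw [h2, Matrix.det_updateRow_add, Matrix.det_updateRow_smul]
    have h3 : (Matrix.updateRow X j w) a = B a := by
      funext i
      simp [Matrix.updateRow_apply, hja.symm, hX, ha]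
    have h4 : Matrix.updateRow (Matrix.updateRow X j w) a (B a) = Matrix.updateRow X j w := by
      rw [← h3]; exact Matrix.updateRow_eq_self _ _
    have h5 : (Matrix.updateRow (Matrix.updateRow X j w) a w).det = 0 := by
      apply Matrix.det_zero_of_row_eq hja
      simp [Matrix.updateRow_apply, hja, hja.symm]
    rw [h4, h5, mul_zero, add_zero, ih hjs]

private lemma det_add_row_mul_aux (B : Matrix m m R) (c w : m → R) :
    ∀ s : Finset m,
      (Matrix.of fun l i => B l i + if l ∈ s then c l * w i else 0).det
        = B.det + ∑ j ∈ s, c j * (B.updateRow j w).det := by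
  intro s
  induction s using Finset.induction_on with
  | empty =>
    have h0 : (Matrix.of fun l i => B l i + if l ∈ (∅ : Finset m) then c l * w i else 0) = B := by
      ext l i; simp
    rw [h0]; simp
  | @insert a s ha ih =>
    have h1 : (Matrix.of fun l i => B l i + if l ∈ insert a s then c l * w i else 0)
        = Matrix.updateRow (Matrix.of fun l i => B l i + if l ∈ s then c l * w i else 0) a
            (B a + c a • w) := by
      ext l i
      rcases eq_or_ne l a with rfl | hl
      · simp
      · simp [Matrix.updateRow_apply, hl, Finset.mem_insert, hl]
    rw [h1, Matrix.det_updateRow_add, Matrix.det_updateRow_smul]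
    set X : Matrix m m R := Matrix.of fun l i => B l i + if l ∈ s then c l * w i else 0 with hX
    have h3 : X a = B a := by funext i; simp [hX, ha]
    have h4 : Matrix.updateRow X a (B a) = X := by
      rw [← h3]; exact Matrix.updateRow_eq_self _ _
    rw [h4, ih, det_updateRow_aux B c w a s ha, Finset.sum_insert ha]
    ring

lemma det_add_row_mul (B : Matrix m m R) (c w : m → R) :
    (Matrix.of fun l i => B l i + c l * w i).det
      = B.det + ∑ j, c j * (B.updateRow j w).det := by
  simpa using det_add_row_mul_aux B c w Finset.univ

end DetExpand

lemma exists_ne_zero_quadratic {F : Type*} [Field F] [Fintype F] (hq : 4 ≤ Fintype.card F)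
    (a b t₀ : F) (h : a + b * t₀ ^ 2 ≠ 0) : ∃ t, t ≠ 0 ∧ a + b * t ^ 2 ≠ 0 := by
  set p : Polynomial F := Polynomial.X * (Polynomial.C a + Polynomial.C b * Polynomial.X ^ 2)
    with hp
  have hq0 : (Polynomial.C a + Polynomial.C b * Polynomial.X ^ 2) ≠ 0 := by
    intro h0
    apply h
    have := congrArg (Polynomial.eval t₀) h0
    simpa using this
  have hpne : p ≠ 0 := mul_ne_zero Polynomial.X_ne_zero hq0
  have hdeg : p.natDegree ≤ 3 := by
    have h1 : (Polynomial.C a + Polynomial.C b * Polynomial.X ^ 2 : Polynomial F).natDegree ≤ 2 := by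
      apply Polynomial.natDegree_add_le_of_degree_le
      · simp
      · calc (Polynomial.C b * Polynomial.X ^ 2 : Polynomial F).natDegree
            ≤ (Polynomial.C b).natDegree + (Polynomial.X ^ 2 : Polynomial F).natDegree :=
              Polynomial.natDegree_mul_le
        _ ≤ 2 := by simp
    have h2 : p.natDegree ≤ (Polynomial.X : Polynomial F).natDegree
        + (Polynomial.C a + Polynomial.C b * Polynomial.X ^ 2).natDegree :=
      Polynomial.natDegree_mul_le
    have h3 : (Polynomial.X : Polynomial F).natDegree = 1 := Polynomial.natDegree_X
    omega
  obtain ⟨t, ht⟩ := p.exists_eval_ne_zero_of_natDegree_lt_card hpne (by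
    rw [Cardinal.mk_fintype]
    exact Nat.cast_lt.mpr (by omega))
  rw [hp] at ht
  simp only [Polynomial.eval_mul, Polynomial.eval_X, Polynomial.eval_add, Polynomial.eval_C,
    Polynomial.eval_pow] at ht
  exact ⟨t, left_ne_zero_of_mul ht, right_ne_zero_of_mul ht⟩

lemma greedy_nonzero {F : Type*} [Field F] [Fintype F] (hq : 4 ≤ Fintype.card F) {n : ℕ}
    (f : (Fin n → F) → F)
    (haff : ∀ (i : Fin n) (v : Fin n → F), ∃ a b : F, ∀ t : F,
        f (Function.update v i t) = a + b * t ^ 2)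
    (v₀ : Fin n → F) (hv₀ : f v₀ ≠ 0) :
    ∃ v, (∀ i, v i ≠ 0) ∧ f v ≠ 0 := by
  suffices h : ∀ m : ℕ, ∃ v, (∀ i : Fin n, (i : ℕ) < m → v i ≠ 0) ∧ f v ≠ 0 by
    obtain ⟨v, hv, hf⟩ := h n
    exact ⟨v, fun i => hv i i.isLt, hf⟩
  intro m
  induction m with
  | zero => exact ⟨v₀, fun i h => absurd h (Nat.not_lt_zero _), hv₀⟩
  | succ m ih =>
    obtain ⟨v, hv, hf⟩ := ih
    by_cases hm : m < n
    · set i₀ : Fin n := ⟨m, hm⟩ with hi₀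
      obtain ⟨a, b, hab⟩ := haff i₀ v
      have h0 : a + b * (v i₀) ^ 2 ≠ 0 := by
        rw [← hab]
        rwa [Function.update_eq_self]
      obtain ⟨t, ht0, ht⟩ := exists_ne_zero_quadratic hq a b _ h0
      refine ⟨Function.update v i₀ t, ?_, by rw [hab]; exact ht⟩
      intro i hi
      rcases eq_or_ne i i₀ with rfl | hne
      · simpa using ht0
      · rw [Function.update_of_ne hne]
        apply hv
        have : (i : ℕ) ≠ m := fun h => hne (Fin.ext h)
        omega
    · exact ⟨v, fun i _ => hv i (lt_of_lt_of_le i.isLt (by omega)), hf⟩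

/-- Every linear code over a field with at least 4 elements is scalar
(hence monomial) equivalent to an LCD code. -/
theorem exists_scaling_LCD {F : Type*} [Field F] [Fintype F]
    (hq : 4 ≤ Fintype.card F) {n : ℕ} (C : Submodule F (Fin n → F)) :
    ∃ v : Fin n → F, (∀ i, v i ≠ 0) ∧
      Submodule.map (LinearMap.mulLeft F v) C ⊓
        dualCode (Submodule.map (LinearMap.mulLeft F v) C) = ⊥ := by
  classical
  set k := Module.finrank F C with hk
  set b : Module.Basis (Fin k) F C := Module.finBasis F C with hb
  set G : Matrix (Fin k) (Fin n) F := Matrix.of fun j i => (b j : Fin n → F) i with hG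
  set M : (Fin n → F) → Matrix (Fin k) (Fin k) F :=
    fun v => Matrix.of fun j l => ∑ i, v i ^ 2 * (G j i * G l i) with hM
  -- Step A: per-coordinate quadratic structure of the Gram determinant
  have haff : ∀ (i₀ : Fin n) (v : Fin n → F), ∃ a c : F, ∀ t : F,
      (M (Function.update v i₀ t)).det = a + c * t ^ 2 := by
    intro i₀ v
    set B : Matrix (Fin k) (Fin k) F :=
      Matrix.of fun j l => ∑ i ∈ Finset.univ.erase i₀, v i ^ 2 * (G j i * G l i) with hB
    set u : Fin k → F := fun j => G j i₀ with hu
    refine ⟨B.det, ∑ j, u j * (B.updateRow j u).det, fun t => ?_⟩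
    have hMeq : M (Function.update v i₀ t)
        = Matrix.of fun j l => B j l + (t ^ 2 * u j) * u l := by
      ext j l
      simp only [hM, Matrix.of_apply, hB, hu]
      rw [← Finset.sum_erase_add _ _ (Finset.mem_univ i₀)]
      congr 1
      · apply Finset.sum_congr rfl
        intro i hi
        rw [Function.update_of_ne (Finset.ne_of_mem_erase hi)]
      · rw [Function.update_self]
        ring
    rw [hMeq, det_add_row_mul]
    congr 1
    rw [mul_comm, Finset.mul_sum]
    apply Finset.sum_congr rfl
    intros
    ring
  -- Step B: a starting point where the Gram determinant is nonzero
  have hrows : LinearIndependent F (fun j : Fin k => (b j : Fin n → F)) :=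
    b.linearIndependent.map' C.subtype (Submodule.ker_subtype C)
  have hGrank : G.rank = k := by
    have h := LinearIndependent.rank_matrix (M := G) hrows
    simpa using h
  have hspancols : Submodule.span F (Set.range Gᵀ) = ⊤ := by
    apply Submodule.eq_top_of_finrank_eq
    rw [show Set.range Gᵀ = Set.range G.col from rfl, ← Matrix.rank_eq_finrank_span_cols, hGrank, Module.finrank_fin_fun]
  obtain ⟨S, hSsub, hSspan, hSind⟩ := exists_linearIndependent F (Set.range Gᵀ)
  rw [hspancols] at hSspan
  have hSfin : S.Finite := Set.Finite.subset (Set.finite_range _) hSsub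
  haveI : Fintype S := hSfin.fintype
  have hcardS : Fintype.card S = k := by
    have h1 : Module.finrank F (Submodule.span F S) = S.toFinset.card :=
      finrank_span_set_eq_card hSind
    rw [hSspan] at h1
    rw [← Set.toFinset_card, ← h1, finrank_top, Module.finrank_fin_fun]
  obtain ⟨e⟩ : Nonempty (Fin k ≃ S) := by
    rw [← Fintype.card_eq, hcardS, Fintype.card_fin]
  have hidx : ∀ x : S, ∃ i : Fin n, Gᵀ i = (x : Fin k → F) := fun x => hSsub x.2
  set σ : Fin k → Fin n := fun a => Classical.choose (hidx (e a)) with hσdef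
  have hσ : ∀ a, Gᵀ (σ a) = ((e a : S) : Fin k → F) := fun a => Classical.choose_spec (hidx (e a))
  have hcols : LinearIndependent F (fun a : Fin k => Gᵀ (σ a)) := by
    have h1 : LinearIndependent F (fun a : Fin k => ((e a : S) : Fin k → F)) :=
      hSind.comp e e.injective
    convert h1 using 1
    funext a
    exact hσ a
  have hσinj : Function.Injective σ := by
    intro a a' h
    exact hcols.injective (by rw [h])
  set A : Matrix (Fin k) (Fin k) F := G.submatrix id σ with hA
  have hAdet : A.det ≠ 0 := by
    intro h0
    have hdetAT : Aᵀ.det = 0 := by rw [Matrix.det_transpose, h0]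
    obtain ⟨y, hy0, hy⟩ := (Matrix.exists_vecMul_eq_zero_iff).mpr hdetAT
    apply hy0
    have h1 : ∑ a, y a • Gᵀ (σ a) = 0 := by
      funext j
      have h2 := congrFun hy j
      simpa [Matrix.vecMul, dotProduct, Finset.sum_apply, Pi.smul_apply, smul_eq_mul,
        Matrix.transpose_apply, hA, Matrix.submatrix_apply] using h2
    have h3 := Fintype.linearIndependent_iff.mp hcols y h1
    funext a
    exact h3 a
  set v₀ : Fin n → F := fun i => if i ∈ Finset.image σ Finset.univ then 1 else 0 with hv₀def
  have hM0 : M v₀ = A * Aᵀ := by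
    ext j l
    simp only [hM, Matrix.of_apply, Matrix.mul_apply, Matrix.transpose_apply, hA,
      Matrix.submatrix_apply, id]
    have h1 : ∀ i, v₀ i ^ 2 * (G j i * G l i)
        = if i ∈ Finset.image σ Finset.univ then G j i * G l i else 0 := by
      intro i
      by_cases hi : i ∈ Finset.image σ Finset.univ
      · simp only [hv₀def, if_pos hi]; ring
      · simp only [hv₀def, if_neg hi]; ring
    rw [Finset.sum_congr rfl fun i _ => h1 i, Finset.sum_ite_mem, Finset.univ_inter,
      Finset.sum_image (fun a _ a' _ h => hσinj h)]
  have hfstart : (M v₀).det ≠ 0 := by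
    rw [hM0, Matrix.det_mul]
    exact mul_ne_zero hAdet (by rwa [Matrix.det_transpose])
  -- Step C: greedy choice of a nonzero-coordinate scaling vector
  obtain ⟨v, hvne, hvdet⟩ := greedy_nonzero hq (fun v => (M v).det) haff v₀ hfstart
  refine ⟨v, hvne, ?_⟩
  -- Step D: conclude that v*C is LCD
  rw [eq_bot_iff]
  intro y hy
  obtain ⟨hy1, hy2⟩ := Submodule.mem_inf.mp hy
  obtain ⟨x, hx, rfl⟩ := Submodule.mem_map.mp hy1
  have hy2' : ∀ c ∈ Submodule.map (LinearMap.mulLeft F v) C,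
      ∑ i, (LinearMap.mulLeft F v x) i * c i = 0 := hy2
  set α : Fin k → F := fun j => b.repr ⟨x, hx⟩ j with hα
  have hxsum : ∀ i, x i = ∑ j, α j * G j i := by
    intro i
    have h1 := b.sum_repr ⟨x, hx⟩
    have h2 := congrArg (fun z : C => ((z : Fin n → F) i)) h1
    simp only [AddSubmonoidClass.coe_finset_sum, Finset.sum_apply, SetLike.val_smul,
      Pi.smul_apply, smul_eq_mul] at h2
    rw [← h2]
    simp [hα, hG]
  have hvm : Matrix.vecMul α (M v) = 0 := by
    funext l
    have hbl : (LinearMap.mulLeft F v) ((b l : Fin n → F)) ∈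
        Submodule.map (LinearMap.mulLeft F v) C :=
      Submodule.mem_map_of_mem (b l).2
    have h3 := hy2' _ hbl
    simp only [LinearMap.mulLeft_apply, Pi.mul_apply] at h3
    have h4 : Matrix.vecMul α (M v) l = ∑ i, (v i * x i) * (v i * (b l : Fin n → F) i) := by
      simp only [Matrix.vecMul, dotProduct, hM, Matrix.of_apply]
      calc ∑ j, α j * ∑ i, v i ^ 2 * (G j i * G l i)
          = ∑ j, ∑ i, α j * (v i ^ 2 * (G j i * G l i)) := by
            apply Finset.sum_congr rfl; intros; rw [Finset.mul_sum]
        _ = ∑ i, ∑ j, α j * (v i ^ 2 * (G j i * G l i)) := Finset.sum_comm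
        _ = ∑ i, (v i * (∑ j, α j * G j i)) * (v i * G l i) := by
            apply Finset.sum_congr rfl
            intro i _
            rw [Finset.mul_sum, Finset.sum_mul]
            apply Finset.sum_congr rfl
            intros
            ring
        _ = ∑ i, (v i * x i) * (v i * G l i) := by
            apply Finset.sum_congr rfl
            intro i _
            rw [← hxsum i]
    rw [Pi.zero_apply, h4]
    exact h3
  have hα0 : α = 0 := Matrix.eq_zero_of_vecMul_eq_zero hvdet hvm
  have hx0 : (⟨x, hx⟩ : C) = 0 := by
    have hrepr : b.repr ⟨x, hx⟩ = 0 := by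
      ext j
      exact congrFun hα0 j
    exact (LinearEquiv.map_eq_zero_iff b.repr).mp hrepr
  have hxz : x = 0 := congrArg Subtype.val hx0
  rw [hxz, map_zero]
  exact Submodule.zero_mem ⊥
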